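/- Let (Ω₁, μ₁) and (Ω₂, μ₂) be probability spaces, let H = L²(μ₁ ⊗ μ₂; ℂ) and let n ≥ 1. For all essentially bounded measurable functions f₁, …, fₙ : Ω₁ → ℂ and g₀, g₁, …, gₙ : Ω₂ → ℂ, the vector state φ(S) = ⟪𝟙, S 𝟙⟫ of the alternating operator product satisfies φ(M g₀ ∘ T f₁ ∘ M g₁ ∘ ⋯ ∘ T fₙ ∘ M gₙ) = (∏_{i=0}^{n} ∫ gᵢ dμ₂) · ∫ (f₁ ⋯ fₙ) dμ₁. (This is the defining moment factorization showing that the algebras {T f} and {M g} are monotone independent in φ.) -/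

import Mathlib

open MeasureTheory
open scoped ENNReal

/-- **Monotone independence moment factorization.** On `H = L²(μ₁ ⊗ μ₂; ℂ)` let `T i` be the
operator `h ↦ ((x₁,x₂) ↦ fᵢ(x₁)·∫ h(x₁,y) dμ₂(y))` (i.e. `fᵢ ⊗ |1⟩⟨1|`) and `M i` the
multiplication operator by `(x₁,x₂) ↦ gᵢ(x₂)` (i.e. `id ⊗ gᵢ`), for essentially bounded
measurable `fᵢ`, `gᵢ`.  Then the vector state `φ(S) = ⟪𝟙, S 𝟙⟫` of the alternating word
`M g₀ ∘ T f₁ ∘ M g₁ ∘ ⋯ ∘ T fₙ ∘ M gₙ` equals `(∏ᵢ ∫ gᵢ dμ₂) · ∫ f₁⋯fₙ dμ₁`: the algebras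
`{T f}` and `{M g}` are monotone independent in `φ`. -/
theorem monotone_independence_moment_factorization
    {Ω₁ Ω₂ : Type*} [MeasurableSpace Ω₁] [MeasurableSpace Ω₂]
    (μ₁ : Measure Ω₁) (μ₂ : Measure Ω₂) [IsProbabilityMeasure μ₁] [IsProbabilityMeasure μ₂]
    (n : ℕ) (hn : 1 ≤ n)
    (f : Fin n → Ω₁ → ℂ) (g : Fin (n + 1) → Ω₂ → ℂ)
    (hfm : ∀ i, Measurable (f i)) (hfb : ∀ i, MemLp (f i) ⊤ μ₁)
    (hgm : ∀ i, Measurable (g i)) (hgb : ∀ i, MemLp (g i) ⊤ μ₂)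
    (T : Fin n → (Lp ℂ 2 (μ₁.prod μ₂) →L[ℂ] Lp ℂ 2 (μ₁.prod μ₂)))
    (M : Fin (n + 1) → (Lp ℂ 2 (μ₁.prod μ₂) →L[ℂ] Lp ℂ 2 (μ₁.prod μ₂)))
    (hT : ∀ i (h : Lp ℂ 2 (μ₁.prod μ₂)), (T i h : Ω₁ × Ω₂ → ℂ) =ᵐ[μ₁.prod μ₂]
      fun p => f i p.1 * ∫ y, (h : Ω₁ × Ω₂ → ℂ) (p.1, y) ∂μ₂)
    (hM : ∀ i (h : Lp ℂ 2 (μ₁.prod μ₂)), (M i h : Ω₁ × Ω₂ → ℂ) =ᵐ[μ₁.prod μ₂]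
      fun p => g i p.2 * (h : Ω₁ × Ω₂ → ℂ) p)
    (one : Lp ℂ 2 (μ₁.prod μ₂)) (hone : (one : Ω₁ × Ω₂ → ℂ) =ᵐ[μ₁.prod μ₂] fun _ => 1) :
    @inner ℂ _ _ one
        ((M 0 * (List.ofFn fun i : Fin n => T i * M i.succ).prod) one)
      = (∏ i : Fin (n + 1), ∫ x, g i x ∂μ₂) * ∫ x, ∏ i : Fin n, f i x ∂μ₁ := by
  classical
  set f' : ℕ → Ω₁ → ℂ := fun i => if h : i < n then f ⟨i, h⟩ else fun _ => 1 with hf'def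
  set g' : ℕ → Ω₂ → ℂ := fun i => if h : i < n + 1 then g ⟨i, h⟩ else fun _ => 1 with hg'def
  set L : List (Lp ℂ 2 (μ₁.prod μ₂) →L[ℂ] Lp ℂ 2 (μ₁.prod μ₂)) :=
    List.ofFn (fun i : Fin n => T i * M i.succ) with hLdef
  have hLlen : L.length = n := by simp [hLdef]
  have hg'eq : ∀ (i : ℕ) (h : i < n + 1), g' i = g ⟨i, h⟩ := by
    intro i h; simp only [hg'def]; rw [dif_pos h]
  have hf'eq : ∀ (i : ℕ) (h : i < n), f' i = f ⟨i, h⟩ := by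
    intro i h; simp only [hf'def]; rw [dif_pos h]
  -- main induction on suffixes of the word
  have key : ∀ d k, k + d = n →
      ((L.drop k).prod one : Ω₁ × Ω₂ → ℂ) =ᵐ[μ₁.prod μ₂]
        fun p => (∏ i ∈ Finset.Ico k n, f' i p.1) *
          ∏ i ∈ Finset.Ico (k + 1) (n + 1), ∫ y, g' i y ∂μ₂ := by
    intro d
    induction d with
    | zero =>
      intro k hk
      have hk' : k = n := by omega
      subst hk'
      rw [← hLlen, List.drop_length, List.prod_nil]
      filter_upwards [hone] with p hp
      simp [ContinuousLinearMap.one_apply, hp]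
    | succ d ih =>
      intro k hk
      have hkn : k < n := by omega
      have hstep : L.drop k = (T ⟨k, hkn⟩ * M (Fin.succ ⟨k, hkn⟩)) :: L.drop (k + 1) := by
        rw [List.drop_eq_getElem_cons (by rw [hLlen]; exact hkn)]
        congr 1
        simp [hLdef, List.getElem_ofFn]
      have ihu := ih (k + 1) (by omega)
      set u : Lp ℂ 2 (μ₁.prod μ₂) := (L.drop (k + 1)).prod one with hudef
      set C : ℂ := ∏ i ∈ Finset.Ico (k + 2) (n + 1), ∫ y, g' i y ∂μ₂ with hCdef
      -- the inner function depends only on the first coordinate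
      set Φ : Ω₁ → ℂ := fun x => (∏ i ∈ Finset.Ico (k + 1) n, f' i x) * C with hΦdef
      have ihu' : (u : Ω₁ × Ω₂ → ℂ) =ᵐ[μ₁.prod μ₂] fun p => Φ p.1 := ihu
      have hgj : g (Fin.succ ⟨k, hkn⟩) = g' (k + 1) := by
        rw [hg'eq (k + 1) (by omega)]
        exact congrArg g (Fin.ext rfl)
      have hMu : ((M (Fin.succ ⟨k, hkn⟩) u : Lp ℂ 2 (μ₁.prod μ₂)) : Ω₁ × Ω₂ → ℂ)
          =ᵐ[μ₁.prod μ₂] fun p => g' (k + 1) p.2 * Φ p.1 := by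
        refine (hM (Fin.succ ⟨k, hkn⟩) u).trans ?_
        filter_upwards [ihu'] with p hp
        rw [hp, hgj]
      have hint : ∀ᵐ p ∂(μ₁.prod μ₂),
          ∫ y, ((M (Fin.succ ⟨k, hkn⟩) u : Lp ℂ 2 (μ₁.prod μ₂)) : Ω₁ × Ω₂ → ℂ) (p.1, y) ∂μ₂
            = Φ p.1 * ∫ y, g' (k + 1) y ∂μ₂ := by
        have h3 : ∀ᵐ x ∂μ₁,
            ∫ y, ((M (Fin.succ ⟨k, hkn⟩) u : Lp ℂ 2 (μ₁.prod μ₂)) : Ω₁ × Ω₂ → ℂ) (x, y) ∂μ₂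
              = Φ x * ∫ y, g' (k + 1) y ∂μ₂ := by
          filter_upwards [Measure.ae_ae_of_ae_prod hMu] with x hx
          rw [integral_congr_ae hx, integral_mul_const, mul_comm]
        exact Measure.quasiMeasurePreserving_fst.ae h3
      have hfj : f ⟨k, hkn⟩ = f' k := (hf'eq k hkn).symm
      rw [hstep, List.prod_cons, ContinuousLinearMap.mul_apply, ContinuousLinearMap.mul_apply,
        ← hudef]
      refine (hT ⟨k, hkn⟩ (M (Fin.succ ⟨k, hkn⟩) u)).trans ?_
      filter_upwards [hint] with p hp
      rw [hp, hfj, Finset.prod_eq_prod_Ico_succ_bot hkn,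
        Finset.prod_eq_prod_Ico_succ_bot (Nat.succ_lt_succ hkn), hΦdef, hCdef]
      ring
  have hkey := key n 0 (by omega)
  rw [List.drop_zero] at hkey
  set C₀ : ℂ := ∏ i ∈ Finset.Ico 1 (n + 1), ∫ y, g' i y ∂μ₂ with hC₀def
  have hg0 : g 0 = g' 0 := by
    rw [hg'eq 0 (by omega)]; exact congrArg g (Fin.ext rfl)
  have hM0 : (((M 0 * L.prod) one : Lp ℂ 2 (μ₁.prod μ₂)) : Ω₁ × Ω₂ → ℂ) =ᵐ[μ₁.prod μ₂]
      fun p => g' 0 p.2 * ((∏ i ∈ Finset.Ico 0 n, f' i p.1) * C₀) := by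
    rw [ContinuousLinearMap.mul_apply]
    refine (hM 0 (L.prod one)).trans ?_
    filter_upwards [hkey] with p hp
    rw [hp, hg0, hC₀def]
  rw [MeasureTheory.L2.inner_def]
  have hcongr : (fun a => @inner ℂ _ _ ((one : Ω₁ × Ω₂ → ℂ) a)
        ((((M 0 * L.prod) one : Lp ℂ 2 (μ₁.prod μ₂)) : Ω₁ × Ω₂ → ℂ) a)) =ᵐ[μ₁.prod μ₂]
      fun p => ((∏ i ∈ Finset.Ico 0 n, f' i p.1) * C₀) * g' 0 p.2 := by
    filter_upwards [hone, hM0] with p h1 h2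
    simp only [RCLike.inner_apply, h1, h2, map_one, one_mul]
    ring
  rw [integral_congr_ae hcongr]
  have hpm : ∫ (a : Ω₁ × Ω₂), ((∏ i ∈ Finset.Ico 0 n, f' i a.1) * C₀) * g' 0 a.2 ∂(μ₁.prod μ₂)
      = (∫ x, (∏ i ∈ Finset.Ico 0 n, f' i x) * C₀ ∂μ₁) * ∫ y, g' 0 y ∂μ₂ :=
    integral_prod_mul (fun x => (∏ i ∈ Finset.Ico 0 n, f' i x) * C₀) (g' 0)
  have hmr : ∫ x, (∏ i ∈ Finset.Ico 0 n, f' i x) * C₀ ∂μ₁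
      = (∫ x, ∏ i ∈ Finset.Ico 0 n, f' i x ∂μ₁) * C₀ := integral_mul_const _ _
  rw [hpm, hmr]
  have hfprod : ∀ x, ∏ i ∈ Finset.Ico 0 n, f' i x = ∏ i : Fin n, f i x := by
    intro x
    rw [← Finset.range_eq_Ico, ← Fin.prod_univ_eq_prod_range (fun i => f' i x) n]
    refine Finset.prod_congr rfl fun i _ => ?_
    rw [hf'eq i i.isLt, Fin.eta]
  have hgprod : (∏ i : Fin (n + 1), ∫ x, g i x ∂μ₂)
      = (∫ x, g' 0 x ∂μ₂) * C₀ := by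
    rw [Fin.prod_univ_succ, hg0, hC₀def]
    congr 1
    rw [Finset.prod_Ico_eq_prod_range]
    simp only [Nat.add_sub_cancel]
    rw [← Fin.prod_univ_eq_prod_range (fun i => ∫ x, g' (1 + i) x ∂μ₂) n]
    refine Finset.prod_congr rfl fun i _ => ?_
    congr 1
    rw [hg'eq (1 + (i : ℕ)) (by omega)]
    exact congrArg g (Fin.ext (Nat.add_comm _ _))
  rw [hgprod]
  simp_rw [hfprod]
  ring
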